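/- Let K = {x ∈ ℝⁿ : Ax ≤ b} be a polytope with A having unit rows, and let v be a vertex of K that maximizes c'^T x over K, where c' ∈ ℝⁿ satisfies ‖c − c'‖₂ < δ/(2n) for a unit vector c, and the rows of A satisfy the δ-distance property with 0 < δ ≤ 1. Write c' = Σ_{j∈B'} μ_j a_j over the basis B' of tight constraints at v (assume nondegeneracy: exactly n tight constraints, linearly independent). If additionally for every k ∈ B' not in the optimal basis B of max{c^T x : x ∈ K} one has ‖c − c'‖₂ ≥ δ·μ_k, then any index k ∈ B' with μ_k > (1/n)(1 − δ/(2n)) belongs to B. -/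

import Mathlib

open Finset RealInnerProductSpace

/-- The δ-distance property of a family of vectors. -/
def DeltaDistanceProperty {ι : Type*} {n : ℕ} (δ : ℝ) (a : ι → EuclideanSpace ℝ (Fin n)) : Prop :=
  ∀ (I : Set ι) (j : ι),
    a j ∉ Submodule.span ℝ (a '' I) →
    δ ≤ Metric.infDist (a j) (Submodule.span ℝ (a '' I) : Set (EuclideanSpace ℝ (Fin n)))

/-- if `v` maximizes `c'ᵀx` over the polytope, `B'` is the basis of tight
constraints at `v`, `c' = Σ_{j∈B'} μ_j a_j`, `‖c − c'‖ < δ/(2n)`, and every `k ∈ B'`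
outside the optimal basis `B` for `c` satisfies `‖c − c'‖ ≥ δ·μ_k`, then any `k ∈ B'`
with `μ_k > (1/n)(1 − δ/(2n))` belongs to `B`. -/
theorem stmt15 (m n : ℕ) (hn : 0 < n) (δ : ℝ) (hδ : 0 < δ) (hδ1 : δ ≤ 1)
    (a : Fin m → EuclideanSpace ℝ (Fin n)) (b : Fin m → ℝ)
    (hunit : ∀ i, ‖a i‖ = 1)
    (hdist : DeltaDistanceProperty δ a)
    (c c' : EuclideanSpace ℝ (Fin n)) (hc : ‖c‖ = 1)
    (v : EuclideanSpace ℝ (Fin n))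
    (hvfeas : ∀ i, ⟪a i, v⟫ ≤ b i)
    (hvopt : ∀ x : EuclideanSpace ℝ (Fin n), (∀ i, ⟪a i, x⟫ ≤ b i) → ⟪c', x⟫ ≤ ⟪c', v⟫)
    (B B' : Finset (Fin m)) (hB : B.card = n) (hB' : B'.card = n)
    (htight : ∀ i, i ∈ B' ↔ ⟪a i, v⟫ = b i)
    (hind : LinearIndependent ℝ (fun j : B' => a j))
    (μ : Fin m → ℝ) (hμ : ∀ j ∈ B', 0 ≤ μ j)
    (hc' : c' = ∑ j ∈ B', μ j • a j)
    (hclose : ‖c - c'‖ < δ / (2 * n))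
    (hsep : ∀ k ∈ B', k ∉ B → δ * μ k ≤ ‖c - c'‖) :
    ∀ k ∈ B', μ k > (1 / n) * (1 - δ / (2 * n)) → k ∈ B := by
  intro k hk hμk
  by_contra hkB
  have h1 : δ * μ k ≤ ‖c - c'‖ := hsep k hk hkB
  have h2 : δ * μ k < δ / (2 * n) := lt_of_le_of_lt h1 hclose
  have hn1 : (1 : ℝ) ≤ (n : ℝ) := by exact_mod_cast hn
  have hnpos : (0 : ℝ) < (n : ℝ) := by linarith
  have hn0 : (n:ℝ) ≠ 0 := ne_of_gt hnpos
  rw [lt_div_iff₀ (by positivity : (0:ℝ) < 2*n)] at h2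
  have h5 : 2*(n:ℝ) - δ < μ k * (2*n*n) := by
    have h6 := mul_lt_mul_of_pos_right hμk (by positivity : (0:ℝ) < 2*n*n)
    calc 2*(n:ℝ) - δ = (1/n * (1 - δ/(2*n))) * (2*n*n) := by field_simp
      _ < μ k * (2*n*n) := h6
  nlinarith [mul_lt_mul_of_pos_left h5 hδ, mul_lt_mul_of_pos_right h2 hnpos]
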